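/- Let n ≥ 1 and let z : Fin n → ℝ be sorted in nonincreasing order (z(i) ≥ z(j) whenever i ≤ j). Let K be the largest k ∈ {1, …, n} such that 1 + k·z(k) > ∑_{j=1}^{k} z(j), and set τ = (∑_{j=1}^{K} z(j) − 1)/K. Then ∑_{i=1}^{n} max(z(i) − τ, 0) = 1, and for every i, z(i) − τ > 0 if and only if i ≤ K. Hence the sparsemax threshold of z equals (∑_{j=1}^{K} z(j) − 1)/K and the supporting set of the sparsemax distribution is exactly {1, …, K}. -/

import Mathlib

open Finset

/-- Closed form of the sparsemax threshold for a vector sorted in nonincreasing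
order: with `K` the largest `k ∈ {1,…,n}` such that `1 + k·z(k) > ∑_{j=1}^k z(j)`
and `τ = (∑_{j=1}^K z(j) − 1)/K`, one has `∑_i max(z(i) − τ, 0) = 1` and the
supporting set of the sparsemax distribution is exactly the first `K` entries. -/
theorem stmt5 (n : ℕ) (hn : 1 ≤ n) (z : Fin n → ℝ)
    (hsorted : ∀ i j : Fin n, i ≤ j → z j ≤ z i)
    (K : ℕ) (hK1 : 1 ≤ K) (hKn : K ≤ n)
    (hKcond : 1 + (K : ℝ) * z ⟨K - 1, by omega⟩ >
      ∑ j ∈ Finset.univ.filter (fun j : Fin n => (j : ℕ) < K), z j)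
    (hKmax : ∀ k : ℕ, (hk : K < k) → (hkn : k ≤ n) →
      ¬(1 + (k : ℝ) * z ⟨k - 1, by omega⟩ >
        ∑ j ∈ Finset.univ.filter (fun j : Fin n => (j : ℕ) < k), z j))
    (τ : ℝ)
    (hτ : τ = ((∑ j ∈ Finset.univ.filter (fun j : Fin n => (j : ℕ) < K), z j) - 1) / K) :
    (∑ i, max (z i - τ) 0 = 1) ∧ ∀ i : Fin n, (0 < z i - τ ↔ (i : ℕ) < K) := by
  have hKpos : (0:ℝ) < K := by exact_mod_cast hK1
  set A := Finset.univ.filter (fun j : Fin n => (j : ℕ) < K) with hA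
  set S := ∑ j ∈ A, z j with hS
  have hK1n : K - 1 < n := by omega
  -- positivity on the support
  have hpos : ∀ i : Fin n, (i : ℕ) < K → 0 < z i - τ := by
    intro i hi
    have hle : z ⟨K-1, hK1n⟩ ≤ z i :=
      hsorted i ⟨K-1, hK1n⟩ (by simp [Fin.le_def]; omega)
    have hτlt : τ < z ⟨K-1, hK1n⟩ := by
      rw [hτ, div_lt_iff₀ hKpos]
      nlinarith [hKcond]
    linarith
  -- nonpositivity off the support
  have hnonpos : ∀ i : Fin n, K ≤ (i : ℕ) → z i - τ ≤ 0 := by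
    intro i hi
    have hKn' : K < n := lt_of_le_of_lt hi i.isLt
    have hmax := hKmax (K+1) (by omega) (by omega)
    push_neg at hmax
    have hidx : (⟨K + 1 - 1, by omega⟩ : Fin n) = ⟨K, hKn'⟩ := by
      simp
    rw [hidx] at hmax
    have hsplit : ∑ j ∈ Finset.univ.filter (fun j : Fin n => (j:ℕ) < K+1), z j
        = S + z ⟨K, hKn'⟩ := by
      have hset : Finset.univ.filter (fun j : Fin n => (j:ℕ) < K+1)
          = insert (⟨K, hKn'⟩ : Fin n) A := by
        ext j
        simp [hA, Fin.ext_iff]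
        omega
      have hnotmem : (⟨K, hKn'⟩ : Fin n) ∉ A := by simp [hA]
      rw [hset, Finset.sum_insert hnotmem, hS]
      ring
    rw [hsplit] at hmax
    have hzK : z i ≤ z ⟨K, hKn'⟩ :=
      hsorted ⟨K, hKn'⟩ i (by simp [Fin.le_def]; omega)
    have hτge : z ⟨K, hKn'⟩ ≤ τ := by
      rw [hτ, le_div_iff₀ hKpos]
      push_cast at hmax ⊢
      nlinarith
    linarith
  have hcard : A.card = K := by
    have : A = Finset.map (Fin.castLEEmb hKn) Finset.univ := by
      ext j
      simp [hA, Fin.castLEEmb, Fin.castLE, Fin.ext_iff]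
      constructor
      · intro hj; exact ⟨⟨j, hj⟩, rfl⟩
      · rintro ⟨a, ha⟩; omega
    rw [this]; simp
  constructor
  · have hsum : ∑ i, max (z i - τ) 0 = ∑ i ∈ A, (z i - τ) := by
      rw [← Finset.sum_filter_add_sum_filter_not Finset.univ
        (fun j : Fin n => (j : ℕ) < K) (fun i => max (z i - τ) 0)]
      have h1 : ∑ i ∈ A, max (z i - τ) 0 = ∑ i ∈ A, (z i - τ) :=
        Finset.sum_congr rfl fun i hi =>
          max_eq_left (le_of_lt (hpos i (by simpa [hA] using hi)))
      have h2 : ∑ i ∈ Finset.univ.filter (fun j : Fin n => ¬ (j : ℕ) < K),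
          max (z i - τ) 0 = 0 :=
        Finset.sum_eq_zero fun i hi => by
          have : K ≤ (i : ℕ) := by
            have := (Finset.mem_filter.mp hi).2; omega
          simpa using max_eq_right (hnonpos i this)
      rw [h1, h2, add_zero]
    rw [hsum, Finset.sum_sub_distrib, Finset.sum_const, hcard, nsmul_eq_mul, ← hS,
      hτ]
    field_simp
    ring
  · intro i
    constructor
    · intro h
      by_contra hc
      have := hnonpos i (by omega)
      linarith
    · exact hpos i
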